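/- Let n ≥ 1 and X the n × n matrix over ℤ[x] with X[i,j] = x^(n^|i-j|). Then Σ_{f functional tree} Π_{i ∈ Fin n} X[i, f(i)] = Σ_{r ∈ Fin n} X[r,r] · det(M_r), where M_r is the (n-1) × (n-1) matrix obtained from diag(X·1) − X by deleting row and column r, and the sum on the left ranges over f : Fin n → Fin n with |f^(n-1)(Fin n)| = 1. -/

import Mathlib

open Finset

/-- det(1 - nilpotent) = 1 over ℤ. -/
lemma det_one_sub_of_isNilpotent {m : ℕ} (A : Matrix (Fin m) (Fin m) ℤ)
    (hA : IsNilpotent A) : (1 - A).det = 1 := by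
  have h := Matrix.isNilpotent_charpoly_sub_pow_of_isNilpotent hA
  have hc : A.charpoly = Polynomial.X ^ (Fintype.card (Fin m)) :=
    sub_eq_zero.mp h.eq_zero
  have := congrArg (Polynomial.eval 1) hc
  rw [Polynomial.eval_pow, Polynomial.eval_X, one_pow] at this
  rw [← this, Matrix.charpoly, ← Polynomial.coe_evalRingHom, RingHom.map_det]
  congr 1
  ext i j
  rcases eq_or_ne i j with rfl | hij
  · simp [Matrix.charmatrix_apply_eq, Matrix.one_apply, Matrix.sub_apply]
  · simp [Matrix.charmatrix_apply_ne _ _ _ hij, Matrix.one_apply_ne hij,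
      Matrix.sub_apply, hij]

/-- Powers of the (off-root) transition matrix of `f`. -/
lemma pMat_pow {m : ℕ} (f : Fin (m+1) → Fin (m+1)) (r : Fin (m+1)) (hr : f r = r) (k : ℕ) :
    ((Matrix.of fun i j : Fin m =>
        if f (r.succAbove i) = r.succAbove j then (1:ℤ) else 0) ^ k)
      = Matrix.of fun i j => if f^[k] (r.succAbove i) = r.succAbove j then 1 else 0 := by
  induction k with
  | zero =>
    ext i j
    simp [Matrix.one_apply, Fin.succAbove_right_inj]
  | succ k ih =>
    ext i j
    rw [pow_succ, ih]
    simp only [Matrix.mul_apply, Matrix.of_apply]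
    rcases eq_or_ne (f^[k] (r.succAbove i)) r with h | h
    · rw [Finset.sum_eq_zero, Function.iterate_succ_apply', h, hr,
        if_neg (Fin.ne_succAbove r j)]
      intro l _
      rw [if_neg, zero_mul]
      rw [h]
      exact Fin.ne_succAbove r l
    · obtain ⟨l0, hl0⟩ := Fin.exists_succAbove_eq h
      rw [Finset.sum_eq_single l0]
      · rw [if_pos hl0.symm, one_mul, Function.iterate_succ_apply', hl0]
      · intro l _ hl
        rw [if_neg, zero_mul]
        rw [← hl0]
        simp [Fin.succAbove_right_inj, hl, (Ne.symm hl)]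
      · simp

/-- If `f` fixes `r` but is not a tree rooted at `r`, there is a cycle avoiding `r`. -/
lemma exists_cycle {m : ℕ} (f : Fin (m+1) → Fin (m+1)) (r : Fin (m+1)) (hr : f r = r)
    (hnt : ¬ ∀ i, f^[m] i = r) :
    ∃ (q : Fin (m+1)) (ℓ : ℕ), 0 < ℓ ∧ f^[ℓ] q = q ∧ ∀ t, f^[t] q ≠ r := by
  push_neg at hnt
  obtain ⟨x, hx⟩ := hnt
  have hni : ¬ Function.Injective (fun t : Fin (m+2) => f^[(t : ℕ)] x) := by
    intro hinj
    have := Fintype.card_le_of_injective _ hinj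
    simp [Fintype.card_fin] at this
  rw [Function.not_injective_iff] at hni
  obtain ⟨a, b, hab, hne⟩ := hni
  -- wlog a < b
  wlog hlt : (b : ℕ) < (a : ℕ) generalizing a b
  · have hne' : (a:ℕ) ≠ (b:ℕ) := fun h => hne (Fin.val_injective h)
    exact this b a hab.symm (Ne.symm hne) (by omega)
  obtain ⟨ℓ, hℓ⟩ : ∃ ℓ, ℓ = (a : ℕ) - (b : ℕ) := ⟨_, rfl⟩
  have hℓpos : 0 < ℓ := by omega
  obtain ⟨q, hq⟩ : ∃ q, q = f^[(b : ℕ)] x := ⟨_, rfl⟩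
  have hcyc : f^[ℓ] q = q := by
    rw [hq, ← Function.iterate_add_apply]
    have h2 : ℓ + (b : ℕ) = (a : ℕ) := by omega
    rw [h2, hab]
  have hper : ∀ s, f^[ℓ * s] q = q := by
    intro s
    induction s with
    | zero => simp
    | succ s ih =>
      rw [Nat.mul_succ, Function.iterate_add_apply, hcyc, ih]
  have hb_le : (b : ℕ) ≤ m := by omega
  refine ⟨q, ℓ, hℓpos, hcyc, fun t ht => ?_⟩
  have hqr : q = r := by
    calc q = f^[ℓ*t] q := (hper t).symm
      _ = f^[ℓ*t - t] (f^[t] q) := by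
          rw [← Function.iterate_add_apply]
          congr 1
          exact (Nat.sub_add_cancel (Nat.le_mul_of_pos_left t hℓpos)).symm
      _ = r := by rw [ht]; exact Function.iterate_fixed hr _
  apply hx
  have h3 : f^[m] x = f^[m - (b:ℕ)] (f^[(b:ℕ)] x) := by
    rw [← Function.iterate_add_apply]
    congr 1
    omega
  rw [h3, ← hq, hqr]
  exact Function.iterate_fixed hr _

open Classical in
lemma det_one_sub_pMat_eq_zero {m : ℕ} (f : Fin (m+1) → Fin (m+1)) (r : Fin (m+1))
    (hr : f r = r) (hnt : ¬ ∀ i, f^[m] i = r) :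
    (1 - Matrix.of fun i j : Fin m =>
        if f (r.succAbove i) = r.succAbove j then (1:ℤ) else 0).det = 0 := by
  obtain ⟨q, ℓ, hℓpos, hcyc, hqr⟩ := exists_cycle f r hr hnt
  -- membership in the cycle
  set C : Fin (m+1) → Prop := fun y => ∃ t, f^[t] q = y with hC
  have hCcl : ∀ y, C y → C (f y) := by
    rintro y ⟨t, rfl⟩
    exact ⟨t + 1, Function.iterate_succ_apply' f t q⟩
  have hCr : ∀ y, C y → y ≠ r := by rintro y ⟨t, rfl⟩; exact hqr t
  -- cancel one application of f on the cycle
  have hcancel : ∀ s t : ℕ, f^[s+1] q = f^[t+1] q → f^[s] q = f^[t] q := by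
    intro s t h
    have h2 : f^[(ℓ-1) + (s+1)] q = f^[(ℓ-1) + (t+1)] q := by
      rw [Function.iterate_add_apply f (ℓ-1) (s+1) q,
        Function.iterate_add_apply f (ℓ-1) (t+1) q, h]
    have hs : (ℓ-1) + (s+1) = s + ℓ := by omega
    have ht : (ℓ-1) + (t+1) = t + ℓ := by omega
    rw [hs, ht, Function.iterate_add_apply f s ℓ q,
      Function.iterate_add_apply f t ℓ q, hcyc] at h2
    exact h2
  -- unique predecessor within the cycle
  have hpred : ∀ y, C y → ∃ z, C z ∧ f z = y ∧ ∀ z', C z' → f z' = y → z' = z := by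
    rintro y ⟨t, rfl⟩
    refine ⟨f^[t + (ℓ-1)] q, ⟨_, rfl⟩, ?_, ?_⟩
    · rw [← Function.iterate_succ_apply' f (t + (ℓ-1)) q]
      have h4 : (t + (ℓ-1)).succ = t + ℓ := by omega
      rw [h4, Function.iterate_add_apply f t ℓ q, hcyc]
    · rintro z' ⟨s, rfl⟩ hz'
      rw [← Function.iterate_succ_apply' f s q] at hz'
      have h3 : f^[s+1] q = f^[(t + (ℓ-1)) + 1] q := by
        have h5 : (t + (ℓ-1)) + 1 = t + ℓ := by omega
        rw [hz', h5, Function.iterate_add_apply f t ℓ q, hcyc]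
      exact hcancel _ _ h3
  -- the indicator vector of the cycle
  obtain ⟨v, hv⟩ : ∃ v : Fin m → ℤ, v = fun i => if C (r.succAbove i) then 1 else 0 := ⟨_, rfl⟩
  have hvM : Matrix.vecMul v (1 - Matrix.of fun i j : Fin m =>
      if f (r.succAbove i) = r.succAbove j then (1:ℤ) else 0) = 0 := by
    funext j
    simp only [Matrix.vecMul, dotProduct, Pi.zero_apply, Matrix.sub_apply,
      Matrix.one_apply, Matrix.of_apply, mul_sub, Finset.sum_sub_distrib]
    have h1 : ∑ i, v i * (if i = j then (1:ℤ) else 0) = v j := by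
      rw [Finset.sum_eq_single j] <;> simp +contextual
    rw [h1]
    have h2 : ∑ i, v i * (if f (r.succAbove i) = r.succAbove j then (1:ℤ) else 0) = v j := by
      by_cases hj : C (r.succAbove j)
      · obtain ⟨z, hzC, hfz, huniq⟩ := hpred _ hj
        obtain ⟨i0, hi0⟩ := Fin.exists_succAbove_eq (hCr z hzC)
        rw [Finset.sum_eq_single i0]
        · rw [hv]
          simp only
          rw [if_pos hj, if_pos (by rw [hi0]; exact hzC), if_pos (by rw [hi0, hfz])]
          norm_num
        · intro i _ hi
          by_cases hiC : C (r.succAbove i)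
          · rw [if_neg, mul_zero]
            intro hfi
            apply hi
            have h6 : r.succAbove i = r.succAbove i0 := by rw [huniq _ hiC hfi, hi0]
            exact Fin.succAbove_right_injective h6
          · rw [hv]; simp only; rw [if_neg hiC, zero_mul]
        · simp
      · rw [Finset.sum_eq_zero, hv]
        · simp only; rw [if_neg hj]
        · intro i _
          by_cases hiC : C (r.succAbove i)
          · rw [if_neg, mul_zero]
            intro hfi
            exact hj (hfi ▸ hCcl _ hiC)
          · rw [hv]; simp only; rw [if_neg hiC, zero_mul]
    rw [h2, sub_self]
  have hvne : v ≠ 0 := by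
    obtain ⟨iq, hiq⟩ := Fin.exists_succAbove_eq (hCr q ⟨0, rfl⟩)
    intro h0
    have := congrFun h0 iq
    rw [hv] at this
    simp only [Pi.zero_apply] at this
    rw [if_pos (by rw [hiq]; exact ⟨0, rfl⟩)] at this
    norm_num at this
  exact Matrix.exists_vecMul_eq_zero_iff.mp ⟨v, hvne, hvM⟩

lemma detB {m : ℕ} (f : Fin (m+1) → Fin (m+1)) (r : Fin (m+1)) (hr : f r = r) :
    (1 - Matrix.of fun i j : Fin m =>
        if f (r.succAbove i) = r.succAbove j then (1:ℤ) else 0).det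
      = if (∀ i, f^[m] i = r) then 1 else 0 := by
  by_cases h : ∀ i, f^[m] i = r
  · rw [if_pos h]
    apply det_one_sub_of_isNilpotent
    refine ⟨m, ?_⟩
    rw [pMat_pow f r hr m]
    ext i j
    simp only [Matrix.of_apply, Matrix.zero_apply, h (r.succAbove i)]
    rw [if_neg (Fin.ne_succAbove r j)]
  · rw [if_neg h]
    exact det_one_sub_pMat_eq_zero f r hr h

open Classical in
lemma main_det {R : Type*} [CommRing R] (m : ℕ) (w : Fin (m+1) → Fin (m+1) → R)
    (r : Fin (m+1)) :
    Matrix.det (Matrix.of fun i j : Fin m =>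
      (if r.succAbove i = r.succAbove j then ∑ k, w (r.succAbove i) k else 0)
        - w (r.succAbove i) (r.succAbove j))
    = ∑ f ∈ Finset.univ.filter
        (fun f : Fin (m+1) → Fin (m+1) => f r = r ∧ ∀ i, f^[m] i = r),
        ∏ i : Fin m, w (r.succAbove i) (f (r.succAbove i)) := by
  -- the row decomposition
  have hrow : ∀ i : Fin m,
      (fun j => (Matrix.of fun i j : Fin m =>
        (if r.succAbove i = r.succAbove j then ∑ k, w (r.succAbove i) k else 0)
          - w (r.succAbove i) (r.succAbove j)) i j)
      = ∑ k : Fin (m+1), w (r.succAbove i) k •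
          (fun j => ((if i = j then 1 else 0) - (if k = r.succAbove j then 1 else 0) : R)) := by
    intro i
    funext j
    simp only [Matrix.of_apply, Finset.sum_apply, Pi.smul_apply, smul_eq_mul, mul_sub,
      Finset.sum_sub_distrib, mul_ite, mul_one, mul_zero]
    congr 1
    · by_cases hij : i = j <;> simp [hij, Fin.succAbove_right_inj]
    · rw [Finset.sum_ite_eq' Finset.univ (r.succAbove j) (w (r.succAbove i))]
      simp
  calc Matrix.det (Matrix.of fun i j : Fin m =>
      (if r.succAbove i = r.succAbove j then ∑ k, w (r.succAbove i) k else 0)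
        - w (r.succAbove i) (r.succAbove j))
      = Matrix.detRowAlternating.toMultilinearMap
          (fun i => ∑ k : Fin (m+1), w (r.succAbove i) k •
            (fun j => ((if i = j then 1 else 0) - (if k = r.succAbove j then 1 else 0) : R))) := by
        exact congrArg _ (funext hrow)
    _ = ∑ κ : Fin m → Fin (m+1), Matrix.detRowAlternating.toMultilinearMap
          (fun i => w (r.succAbove i) (κ i) •
            (fun j => ((if i = j then 1 else 0) - (if κ i = r.succAbove j then 1 else 0) : R))) :=
        MultilinearMap.map_sum _ _
    _ = ∑ κ : Fin m → Fin (m+1), (∏ i, w (r.succAbove i) (κ i)) •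
          Matrix.detRowAlternating.toMultilinearMap
          (fun i => (fun j =>
            ((if i = j then 1 else 0) - (if κ i = r.succAbove j then 1 else 0) : R))) := by
        exact Finset.sum_congr rfl fun κ _ => MultilinearMap.map_smul_univ _ _ _
    _ = ∑ κ : Fin m → Fin (m+1), (∏ i, w (r.succAbove i) (κ i)) *
          (if (∀ x, (Fin.insertNth (α := fun _ => Fin (m+1)) r r κ)^[m] x = r) then 1 else 0) := by
        refine Finset.sum_congr rfl fun κ _ => ?_
        rw [smul_eq_mul]
        congr 1
        have hmat : (Matrix.of fun (i j : Fin m) =>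
            ((if i = j then 1 else 0) - (if κ i = r.succAbove j then 1 else 0) : R))
            = ((Int.castRingHom R).mapMatrix
              (1 - Matrix.of fun i j : Fin m =>
                if (Fin.insertNth (α := fun _ => Fin (m+1)) r r κ) (r.succAbove i)
                  = r.succAbove j then (1:ℤ) else 0)) := by
          ext i j
          simp only [RingHom.mapMatrix_apply, Matrix.map_apply, Matrix.sub_apply,
            Matrix.one_apply, Matrix.of_apply, Fin.insertNth_apply_succAbove]
          split_ifs <;> simp
        show (Matrix.of fun (i j : Fin m) =>
            ((if i = j then 1 else 0) - (if κ i = r.succAbove j then 1 else 0) : R)).det = _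
        rw [hmat, ← RingHom.map_det, detB _ r (Fin.insertNth_apply_same (α := fun _ => Fin (m+1)) r r κ)]
        split_ifs <;> simp
    _ = ∑ f ∈ Finset.univ.filter
        (fun f : Fin (m+1) → Fin (m+1) => f r = r ∧ ∀ i, f^[m] i = r),
        ∏ i : Fin m, w (r.succAbove i) (f (r.succAbove i)) := by
        simp only [mul_ite, mul_one, mul_zero]
        rw [← Finset.sum_filter]
        refine Finset.sum_nbij' (fun κ => Fin.insertNth (α := fun _ => Fin (m+1)) r r κ)
          (fun f => Fin.removeNth r f) ?_ ?_ ?_ ?_ ?_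
        · intro κ hκ
          simp only [Finset.mem_filter, Finset.mem_univ, true_and] at hκ ⊢
          exact ⟨by simp, hκ⟩
        · intro f hf
          simp only [Finset.mem_filter, Finset.mem_univ, true_and] at hf ⊢
          obtain ⟨hfr, hft⟩ := hf
          intro x
          have hins := Fin.insertNth_self_removeNth r f
          rw [hfr] at hins
          rw [hins]
          exact hft x
        · intro κ _
          exact Fin.removeNth_insertNth (α := fun _ => Fin (m+1)) r r κ
        · intro f hf
          simp only [Finset.mem_filter, Finset.mem_univ, true_and] at hf
          have hins := Fin.insertNth_self_removeNth r f
          rw [hf.1] at hins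
          exact hins
        · intro κ _
          refine Finset.prod_congr rfl fun i _ => ?_
          simp

lemma fix_of_tree {m : ℕ} (f : Fin (m+1) → Fin (m+1)) (r : Fin (m+1))
    (hr : ∀ i, f^[m] i = r) : f r = r := by
  have h1 : f (f^[m] r) = f^[m] (f r) := by
    rw [← Function.iterate_succ_apply' f m r, Function.iterate_succ_apply]
  rw [hr r] at h1
  rw [h1, hr (f r)]

open Polynomial in
/-- all-minors matrix-tree identity for the functional-tree generating
function: with `n = m + 1 ≥ 1` and `X[i,j] = x^(n^|i-j|)`,
`∑_{f functional tree} ∏_i X[i, f i] = ∑_r X[r,r] · det M_r`. -/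
theorem stmt_15 (m : ℕ) :
    (∑ f ∈ Finset.univ.filter (fun f : Fin (m + 1) → Fin (m + 1) =>
          ∃ r : Fin (m + 1), ∀ i : Fin (m + 1), f^[m] i = r),
        ∏ i : Fin (m + 1),
          (Polynomial.X : Polynomial ℤ) ^ ((m + 1) ^ (((i : ℤ) - (f i : ℤ)).natAbs))) =
      ∑ r : Fin (m + 1),
        (Polynomial.X : Polynomial ℤ) ^ ((m + 1) ^ (((r : ℤ) - (r : ℤ)).natAbs)) *
          Matrix.det (fun i j : Fin m =>
            (if r.succAbove i = r.succAbove j then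
                ∑ k : Fin (m + 1),
                  (Polynomial.X : Polynomial ℤ) ^
                    ((m + 1) ^ (((r.succAbove i : ℤ) - (k : ℤ)).natAbs))
              else 0) -
              (Polynomial.X : Polynomial ℤ) ^
                ((m + 1) ^ (((r.succAbove i : ℤ) - (r.succAbove j : ℤ)).natAbs))) := by
  classical
  have hdet : ∀ r : Fin (m+1),
      Matrix.det (fun i j : Fin m =>
        (if r.succAbove i = r.succAbove j then
            ∑ k : Fin (m + 1),
              (Polynomial.X : Polynomial ℤ) ^
                ((m + 1) ^ (((r.succAbove i : ℤ) - (k : ℤ)).natAbs))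
          else 0) -
          (Polynomial.X : Polynomial ℤ) ^
            ((m + 1) ^ (((r.succAbove i : ℤ) - (r.succAbove j : ℤ)).natAbs)))
      = ∑ f ∈ Finset.univ.filter
          (fun f : Fin (m+1) → Fin (m+1) => f r = r ∧ ∀ i, f^[m] i = r),
          ∏ i : Fin m, (Polynomial.X : Polynomial ℤ) ^
            ((m + 1) ^ (((r.succAbove i : ℤ) - (f (r.succAbove i) : ℤ)).natAbs)) :=
    fun r => main_det m
      (fun a b => (Polynomial.X : Polynomial ℤ) ^ ((m + 1) ^ (((a : ℤ) - (b : ℤ)).natAbs))) r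
  calc (∑ f ∈ Finset.univ.filter (fun f : Fin (m + 1) → Fin (m + 1) =>
          ∃ r : Fin (m + 1), ∀ i : Fin (m + 1), f^[m] i = r),
        ∏ i : Fin (m + 1),
          (Polynomial.X : Polynomial ℤ) ^ ((m + 1) ^ (((i : ℤ) - (f i : ℤ)).natAbs)))
      = ∑ f ∈ Finset.univ.biUnion (fun r : Fin (m+1) => Finset.univ.filter
          (fun f : Fin (m+1) → Fin (m+1) => f r = r ∧ ∀ i, f^[m] i = r)),
        ∏ i : Fin (m + 1),
          (Polynomial.X : Polynomial ℤ) ^ ((m + 1) ^ (((i : ℤ) - (f i : ℤ)).natAbs)) := by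
        apply Finset.sum_congr _ (fun _ _ => rfl)
        ext f
        simp only [Finset.mem_filter, Finset.mem_univ, true_and, Finset.mem_biUnion]
        constructor
        · rintro ⟨r, hr⟩
          exact ⟨r, fix_of_tree f r hr, hr⟩
        · rintro ⟨r, _, hr⟩
          exact ⟨r, hr⟩
    _ = ∑ r : Fin (m+1), ∑ f ∈ Finset.univ.filter
          (fun f : Fin (m+1) → Fin (m+1) => f r = r ∧ ∀ i, f^[m] i = r),
        ∏ i : Fin (m + 1),
          (Polynomial.X : Polynomial ℤ) ^ ((m + 1) ^ (((i : ℤ) - (f i : ℤ)).natAbs)) := by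
        apply Finset.sum_biUnion
        intro r1 _ r2 _ hne
        simp only [Finset.disjoint_left, Finset.mem_filter, Finset.mem_univ, true_and]
        rintro f ⟨_, h1⟩ ⟨_, h2⟩
        exact hne ((h1 0).symm.trans (h2 0))
    _ = ∑ r : Fin (m + 1),
        (Polynomial.X : Polynomial ℤ) ^ ((m + 1) ^ (((r : ℤ) - (r : ℤ)).natAbs)) *
          Matrix.det (fun i j : Fin m =>
            (if r.succAbove i = r.succAbove j then
                ∑ k : Fin (m + 1),
                  (Polynomial.X : Polynomial ℤ) ^
                    ((m + 1) ^ (((r.succAbove i : ℤ) - (k : ℤ)).natAbs))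
              else 0) -
              (Polynomial.X : Polynomial ℤ) ^
                ((m + 1) ^ (((r.succAbove i : ℤ) - (r.succAbove j : ℤ)).natAbs))) := by
        refine Finset.sum_congr rfl fun r _ => ?_
        rw [hdet r, Finset.mul_sum]
        refine Finset.sum_congr rfl fun f hf => ?_
        simp only [Finset.mem_filter, Finset.mem_univ, true_and] at hf
        rw [Fin.prod_univ_succAbove (fun x => (Polynomial.X : Polynomial ℤ) ^
          ((m + 1) ^ (((x : ℤ) - (f x : ℤ)).natAbs))) r, hf.1]
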